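/- The set {e_1 + e_2 + ... + e_n - e_{n+1} : n ∈ ℕ} of vectors in c₀, where (e_k) is the canonical basis, is a normalized 2-equilateral set; that is, each element has norm 1 and any two distinct elements are at distance exactly 2. -/

import Mathlib

open Set Filter

noncomputable section

/-- The canonical unit vector basis of `c₀`. -/
def e (k : ℕ) : ZeroAtInftyContinuousMap ℕ ℝ where
  toFun m := if m = k then 1 else 0
  continuous_toFun := continuous_of_discreteTopology
  zero_at_infty' := by
    rw [cocompact_eq_cofinite]
    apply Filter.Tendsto.congr' _ tendsto_const_nhds
    filter_upwards [Filter.eventually_cofinite_ne k] with m hm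
    simp [hm]

/-- The vector `e 0 + e 1 + ⋯ + e n - e (n+1)` in `c₀`. -/
def v (n : ℕ) : ZeroAtInftyContinuousMap ℕ ℝ :=
  (∑ k ∈ Finset.range (n + 1), e k) - e (n + 1)

lemma c0_sum_apply (s : Finset ℕ) (f : ℕ → ZeroAtInftyContinuousMap ℕ ℝ) (k : ℕ) :
    (∑ i ∈ s, f i) k = ∑ i ∈ s, f i k := by
  induction s using Finset.cons_induction with
  | empty => rfl
  | cons a s ha ih => rw [Finset.sum_cons, Finset.sum_cons, ← ih]; rfl

lemma e_apply (k m : ℕ) : e k m = if m = k then 1 else 0 := rfl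

lemma v_apply (n k : ℕ) : v n k = if k ≤ n then 1 else if k = n + 1 then -1 else 0 := by
  have : v n k = (∑ i ∈ Finset.range (n + 1), e i) k - e (n + 1) k := rfl
  rw [this, c0_sum_apply]
  simp only [e_apply]
  rw [Finset.sum_ite_eq (Finset.range (n+1)) k (fun _ => (1:ℝ))]
  simp only [Finset.mem_range, Nat.lt_succ_iff]
  rcases le_or_gt k n with h | h
  · simp [h, Nat.ne_of_lt (Nat.lt_succ_of_le h)]
  · simp [not_le.mpr h, h.ne']
    split <;> simp

lemma v_abs_le (n k : ℕ) : |v n k| ≤ 1 := by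
  rw [v_apply]; split
  · simp
  · split <;> simp

lemma norm_eq (f : ZeroAtInftyContinuousMap ℕ ℝ) : ‖f‖ = ‖f.toBCF‖ :=
  (ZeroAtInftyContinuousMap.norm_toBCF_eq_norm).symm

/-- The set `{e_1 + ⋯ + e_n - e_{n+1} : n ∈ ℕ}` is a normalized 2-equilateral
set in `c₀`. -/
theorem stmt0 :
    (∀ n : ℕ, ‖v n‖ = 1) ∧
    (∀ n m : ℕ, n ≠ m → ‖v n - v m‖ = 2) := by
  have key : ∀ n m : ℕ, n < m → ‖v n - v m‖ = 2 := by
    intro n m h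
    rw [norm_eq]
    apply le_antisymm
    · apply BoundedContinuousFunction.norm_le (by norm_num) |>.2
      intro k
      have : (v n - v m).toBCF k = v n k - v m k := rfl
      rw [this, Real.norm_eq_abs]
      calc |v n k - v m k| ≤ |v n k| + |v m k| := abs_sub _ _
        _ ≤ 2 := by linarith [v_abs_le n k, v_abs_le m k]
    · have hle := BoundedContinuousFunction.norm_coe_le_norm (v n - v m).toBCF (n+1)
      have : (v n - v m).toBCF (n+1) = v n (n+1) - v m (n+1) := rfl
      rw [this] at hle
      rw [v_apply, v_apply] at hle
      simp [Nat.not_succ_le_self, Nat.succ_le_of_lt h] at hle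
      rw [norm_eq] at hle
      have h2 : |(-1:ℝ) - 1| = 2 := by norm_num
      linarith
  constructor
  · intro n
    rw [norm_eq]
    apply le_antisymm
    · apply BoundedContinuousFunction.norm_le (by norm_num) |>.2
      intro k
      have : (v n).toBCF k = v n k := rfl
      rw [this, Real.norm_eq_abs]; exact v_abs_le n k
    · have hle := BoundedContinuousFunction.norm_coe_le_norm (v n).toBCF 0
      have : (v n).toBCF 0 = v n 0 := rfl
      rw [this, v_apply] at hle
      simpa using hle
  · intro n m h
    rcases h.lt_or_gt with h | h
    · exact key n m h
    · rw [← norm_neg]; simpa using key m n h
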